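/- Let M be a matroid on a finite ground set E, let v ∈ E with {v} independent in M, and let C be a cocircuit of M with v ∈ C. Set M'' := (M ⧸ {v}) ⧹ (C \ {v}), so that J(M'') = J(M ⧸ {v}) : x_C. Let ℓ ≥ 1 and let S ⊆ E be such that x_S is a minimal squarefree monomial of J(M'')^{(ℓ)}, i.e., x_S ∈ J(M'')^{(ℓ)} and x_{S'} ∉ J(M'')^{(ℓ)} for every proper subset S' ⊊ S. Then S ∩ C = ∅ and x_{S ∪ C} = x_S · x_C is a minimal squarefree monomial of J(M)^{(ℓ+1)}; equivalently, x_S · x_C is a minimal monomial generator of SF_{ℓ+1}(J(M)). -/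

import Mathlib

open Matroid MvPolynomial

/-- The squarefree monomial `x_S = ∏_{i ∈ S} x_i`. -/
noncomputable def xS {α : Type*} [Fintype α] (K : Type*) [Field K] (S : Set α) :
    MvPolynomial α K :=
  ∏ i ∈ S.toFinite.toFinset, MvPolynomial.X i

/-- The monomial `x^γ = ∏ i, x_i ^ γ(i)`. -/
noncomputable def xPow {α : Type*} [Fintype α] (K : Type*) [Field K] (γ : α → ℕ) :
    MvPolynomial α K :=
  ∏ i : α, (MvPolynomial.X i : MvPolynomial α K) ^ γ i

/-- `p_S`: the ideal of `K[x_i : i ∈ α]` generated by the variables `x_i`, `i ∈ S`. -/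
noncomputable def pS {α : Type*} (K : Type*) [Field K] (S : Set α) :
    Ideal (MvPolynomial α K) :=
  Ideal.span (MvPolynomial.X '' S)

/-- The cover ideal `J(M) = ⋂_{F basis of M} p_F` of a matroid `M`. -/
noncomputable def coverIdeal {α : Type*} [Fintype α] (K : Type*) [Field K] (M : Matroid α) :
    Ideal (MvPolynomial α K) :=
  ⨅ F ∈ {F : Set α | M.IsBase F}, pS K F

/-- The `ℓ`-th symbolic power `J(M)^{(ℓ)} = ⋂_{F basis of M} p_F^ℓ` of the cover ideal. -/
noncomputable def symbPow {α : Type*} [Fintype α] (K : Type*) [Field K] (M : Matroid α)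
    (ℓ : ℕ) : Ideal (MvPolynomial α K) :=
  ⨅ F ∈ {F : Set α | M.IsBase F}, (pS K F) ^ ℓ

/-- `SF_ℓ(J(M))`: the ideal generated by the squarefree monomials of `J(M)^{(ℓ)}`, i.e. by the
monomials `x_S` with `|S ∩ F| ≥ ℓ` for every basis `F` of `M`. -/
noncomputable def SF {α : Type*} [Fintype α] (K : Type*) [Field K] (M : Matroid α)
    (ℓ : ℕ) : Ideal (MvPolynomial α K) :=
  Ideal.span {m : MvPolynomial α K |
    ∃ S : Set α, m = xS K S ∧ ∀ F : Set α, M.IsBase F → ℓ ≤ (S ∩ F).ncard}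

/-- Matroid deletion: `M ⧹ D` is the restriction of `M` to `M.E \ D`. -/
def mdel {α : Type*} (M : Matroid α) (D : Set α) : Matroid α := M ↾ (M.E \ D)

/-- Matroid contraction: `M ⧸ C = (M✶ ⧹ C)✶`. -/
def mcon {α : Type*} (M : Matroid α) (C : Set α) : Matroid α := (mdel M✶ C)✶

/-- A cocircuit of `M`: a minimal subset of the ground set meeting every basis of `M`. -/
def IsCocircuit' {α : Type*} (M : Matroid α) (C : Set α) : Prop :=
  C ⊆ M.E ∧ (∀ F, M.IsBase F → (C ∩ F).Nonempty) ∧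
    ∀ C' : Set α, C' ⊂ C → ∃ F, M.IsBase F ∧ C' ∩ F = ∅

/-! ### Auxiliary algebraic lemmas -/

lemma prod_X_mem_pow {α : Type*} (K : Type*) [Field K] {F : Set α} (T : Finset α)
    (hT : ∀ i ∈ T, i ∈ F) : (∏ i ∈ T, (X i : MvPolynomial α K)) ∈ (pS K F) ^ T.card := by
  classical
  induction T using Finset.induction_on with
  | empty => simp [Ideal.one_eq_top]
  | @insert a T ha ih =>
    rw [Finset.prod_insert ha, Finset.card_insert_of_notMem ha, pow_succ,
      mul_comm (X a : MvPolynomial α K)]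
    exact Ideal.mul_mem_mul (ih fun i hi => hT i (Finset.mem_insert_of_mem hi))
      (Ideal.subset_span ⟨a, hT a (Finset.mem_insert_self a T), rfl⟩)

lemma xS_mem_pow_iff {α : Type*} [Fintype α] (K : Type*) [Field K] (S F : Set α) (n : ℕ) :
    xS K S ∈ (pS K F) ^ n ↔ n ≤ (S ∩ F).ncard := by
  classical
  constructor
  · intro h
    by_contra hlt
    push_neg at hlt
    set φ : MvPolynomial α K →ₐ[K] Polynomial K :=
      MvPolynomial.aeval (fun i => if i ∈ F then Polynomial.X else 1) with hφ
    have hmap : Ideal.map φ.toRingHom (pS K F) ≤ Ideal.span {Polynomial.X} := by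
      rw [pS, Ideal.map_span, Ideal.span_le]
      rintro y ⟨_, ⟨i, hi, rfl⟩, rfl⟩
      simp only [AlgHom.toRingHom_eq_coe, RingHom.coe_coe, aeval_X, hφ, if_pos hi]
      exact Ideal.subset_span rfl
    have h2 : φ (xS K S) ∈ Ideal.span {Polynomial.X} ^ n := by
      have := Ideal.mem_map_of_mem φ.toRingHom h
      rw [Ideal.map_pow] at this
      exact (Ideal.pow_right_mono hmap n) this
    have h3 : φ (xS K S) = Polynomial.X ^ (S ∩ F).ncard := by
      rw [xS, map_prod]
      have : ∀ i ∈ S.toFinite.toFinset, φ (X i) = if i ∈ F then Polynomial.X else 1 := by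
        intro i _; simp [hφ]
      rw [Finset.prod_congr rfl this, ← Finset.prod_filter, Finset.prod_const]
      congr 1
      rw [Set.ncard_eq_toFinset_card _ (Set.toFinite (S ∩ F))]
      congr 1
      ext i
      simp only [Finset.mem_filter, Set.Finite.mem_toFinset, Set.mem_inter_iff]
    rw [h3, Ideal.span_singleton_pow, Ideal.mem_span_singleton] at h2
    have := Polynomial.natDegree_le_of_dvd h2 (pow_ne_zero _ Polynomial.X_ne_zero)
    simp only [Polynomial.natDegree_X_pow] at this
    omega
  · intro h
    rw [Set.ncard_eq_toFinset_card _ (Set.toFinite (S ∩ F))] at h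
    obtain ⟨T, hTsub, hTcard⟩ := Finset.exists_subset_card_eq h
    have hTS : T ⊆ S.toFinite.toFinset := by
      intro i hi
      have := hTsub hi
      rw [Set.Finite.mem_toFinset] at this ⊢
      exact this.1
    have key : (∏ i ∈ T, (X i : MvPolynomial α K)) ∈ (pS K F) ^ n := by
      rw [← hTcard]
      exact prod_X_mem_pow K T fun i hi => ((Set.Finite.mem_toFinset _).1 (hTsub hi)).2
    have hsplit : xS K S = (∏ i ∈ S.toFinite.toFinset \ T, (X i : MvPolynomial α K)) *
        ∏ i ∈ T, (X i : MvPolynomial α K) := by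
      rw [xS, ← Finset.prod_sdiff hTS]
    rw [hsplit]
    exact Ideal.mul_mem_left _ _ key

lemma mem_symbPow_iff {α : Type*} [Fintype α] (K : Type*) [Field K] (M : Matroid α)
    (n : ℕ) (S : Set α) :
    xS K S ∈ symbPow K M n ↔ ∀ F : Set α, M.IsBase F → n ≤ (S ∩ F).ncard := by
  rw [symbPow]
  simp only [Ideal.mem_iInf, Set.mem_setOf_eq]
  constructor
  · intro h F hF
    exact (xS_mem_pow_iff K S F n).1 (h F hF)
  · intro h F hF
    exact (xS_mem_pow_iff K S F n).2 (h F hF)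

/-! ### Auxiliary matroid lemmas -/

lemma basis_iff_base_subset {α : Type*} (M : Matroid α) {B₀ X F : Set α}
    (hB₀ : M.IsBase B₀) (hB₀X : B₀ ⊆ X) (hX : X ⊆ M.E) :
    M.IsBasis F X ↔ M.IsBase F ∧ F ⊆ X := by
  constructor
  · intro h
    obtain ⟨B₁, hB₁, hFB₁, hB₁sub⟩ := h.indep.exists_isBase_subset_union_isBase hB₀
    have hFeq : F = B₁ :=
      ((Matroid.isBasis_iff hX).1 h).2.2 B₁ hB₁.indep hFB₁
        (hB₁sub.trans (Set.union_subset h.subset hB₀X))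
    exact ⟨hFeq ▸ hB₁, h.subset⟩
  · rintro ⟨hF, hFX⟩
    exact hF.isBasis_of_subset hX hFX

lemma mcon_ground {α : Type*} (M : Matroid α) (v : α) (hE : M.E = Set.univ) :
    (mcon M {v}).E = Set.univ \ {v} := by
  simp [mcon, mdel, hE]

lemma mcon_base_iff {α : Type*} {M : Matroid α} {v : α} (hE : M.E = Set.univ)
    {Bv : Set α} (hBv : M.IsBase Bv) (hvBv : v ∈ Bv) (B : Set α) :
    (mcon M {v}).IsBase B ↔ v ∉ B ∧ M.IsBase (insert v B) := by
  have hEd : M✶.E = Set.univ := by rw [Matroid.dual_ground, hE]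
  have h1 : mcon M {v} = (M✶ ↾ (Set.univ \ {v}))✶ := by
    rw [mcon, mdel, hEd]
  have hB₀ : M✶.IsBase (Set.univ \ Bv) := by
    have := hBv.compl_isBase_dual
    rwa [hE] at this
  rw [h1, Matroid.dual_isBase_iff', Matroid.restrict_ground_eq,
    Matroid.isBase_restrict_iff (X := Set.univ \ {v}) (by rw [hEd]; exact Set.diff_subset),
    basis_iff_base_subset M✶ hB₀ (by intro x hx; exact ⟨trivial, fun h => hx.2 (h ▸ hvBv)⟩)
      (by rw [hEd]; exact Set.diff_subset),
    Matroid.dual_isBase_iff' ]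
  rw [hE]
  constructor
  · rintro ⟨⟨⟨hb, _⟩, _⟩, hB⟩
    have hset : Set.univ \ ((Set.univ \ {v}) \ B) = insert v B := by
      ext x; simp; tauto
    rw [hset] at hb
    exact ⟨fun hvB => (hB hvB).2 rfl, hb⟩
  · rintro ⟨hvB, hb⟩
    have hset : Set.univ \ ((Set.univ \ {v}) \ B) = insert v B := by
      ext x; simp; tauto
    refine ⟨⟨⟨hset ▸ hb, fun x _ => trivial⟩, Set.diff_subset⟩, ?_⟩
    intro x hx
    exact ⟨trivial, fun h => hvB (h ▸ hx)⟩

lemma exists_base_inter_eq {α : Type*} {M : Matroid α} {C : Set α} {v : α}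
    (hC : IsCocircuit' M C) (hv : v ∈ C) : ∃ F₀, M.IsBase F₀ ∧ F₀ ∩ C = {v} := by
  obtain ⟨F₀, hF₀, hdisj⟩ := hC.2.2 (C \ {v}) (Set.sdiff_singleton_ssubset.2 hv)
  refine ⟨F₀, hF₀, ?_⟩
  obtain ⟨x, hxC, hxF⟩ := hC.2.1 F₀ hF₀
  have hxv : x = v := by
    by_contra hne
    exact Set.eq_empty_iff_forall_notMem.1 hdisj x ⟨⟨hxC, hne⟩, hxF⟩
  subst hxv
  ext y
  constructor
  · rintro ⟨hyF, hyC⟩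
    by_contra hne
    exact Set.eq_empty_iff_forall_notMem.1 hdisj y ⟨⟨hyC, fun h => hne h⟩, hyF⟩
  · rintro rfl
    exact ⟨hxF, hxC⟩

lemma mpp_base_iff {α : Type*} {M : Matroid α} {v : α} {C : Set α} (hE : M.E = Set.univ)
    (hv : v ∈ C)
    {F₀ : Set α} (hF₀ : M.IsBase F₀) (hF₀C : F₀ ∩ C = {v}) (F : Set α) :
    (mdel (mcon M {v}) (C \ {v})).IsBase F ↔ F ∩ C = ∅ ∧ M.IsBase (insert v F) := by
  have hvF₀ : v ∈ F₀ := by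
    have : v ∈ F₀ ∩ C := hF₀C ▸ rfl
    exact this.1
  have hG : (mcon M {v}).E \ (C \ {v}) = Set.univ \ C := by
    rw [mcon_ground M v hE]
    ext x
    constructor
    · rintro ⟨hx1, hx2⟩
      exact ⟨trivial, fun hxC => hx2 ⟨hxC, fun h => hx1.2 h⟩⟩
    · intro hx
      exact ⟨⟨trivial, fun h => hx.2 (h ▸ hv)⟩, fun hh => hx.2 hh.1⟩
  have hsub : Set.univ \ C ⊆ (mcon M {v}).E := by
    rw [mcon_ground M v hE]
    exact fun x hx => ⟨trivial, fun h => hx.2 (h ▸ hv)⟩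
  have hB₀' : (mcon M {v}).IsBase (F₀ \ {v}) := by
    rw [mcon_base_iff hE hF₀ hvF₀]
    constructor
    · exact fun h => h.2 rfl
    · rwa [Set.insert_diff_singleton, Set.insert_eq_self.2 hvF₀]
  have hB₀X : F₀ \ {v} ⊆ Set.univ \ C := by
    intro x hx
    refine ⟨trivial, fun hxC => hx.2 ?_⟩
    have : x ∈ F₀ ∩ C := ⟨hx.1, hxC⟩
    rw [hF₀C] at this
    exact this
  rw [mdel, hG, Matroid.isBase_restrict_iff (X := Set.univ \ C) hsub,
    basis_iff_base_subset _ hB₀' hB₀X hsub, mcon_base_iff hE hF₀ hvF₀]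
  constructor
  · rintro ⟨⟨hvF, hb⟩, hFC⟩
    refine ⟨?_, hb⟩
    ext x
    simp only [Set.mem_inter_iff, Set.mem_empty_iff_false, iff_false]
    rintro ⟨hxF, hxC⟩
    exact (hFC hxF).2 hxC
  · rintro ⟨hFC, hb⟩
    have hvF : v ∉ F := fun h => Set.eq_empty_iff_forall_notMem.1 hFC v ⟨h, hv⟩
    exact ⟨⟨hvF, hb⟩, fun x hx =>
      ⟨trivial, fun hxC => Set.eq_empty_iff_forall_notMem.1 hFC x ⟨hx, hxC⟩⟩⟩

lemma exchange_lemma {α : Type*} {M : Matroid α} {C : Set α} {v c : α} {F : Set α}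
    (hC : IsCocircuit' M C) (hvC : v ∈ C) (hcC : c ∈ C)
    (hFC : F ∩ C = ∅) (hB : M.IsBase (insert v F)) :
    M.IsBase (insert c F) := by
  have hvF : v ∉ F := fun h => Set.eq_empty_iff_forall_notMem.1 hFC v ⟨h, hvC⟩
  by_cases hcv : c = v
  · rwa [hcv]
  obtain ⟨F₁, hF₁, hdisj⟩ := hC.2.2 (C \ {c}) (Set.sdiff_singleton_ssubset.2 hcC)
  have hvF₁ : v ∉ F₁ := fun h =>
    Set.eq_empty_iff_forall_notMem.1 hdisj v ⟨⟨hvC, fun hh => hcv hh.symm⟩, h⟩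
  obtain ⟨f, hf, hbase⟩ := hB.exchange hF₁ ⟨Set.mem_insert v F, hvF₁⟩
  have hId : insert v F \ {v} = F := by
    rw [Set.insert_diff_self_of_notMem hvF]
  rw [hId] at hbase
  have hfc : f = c := by
    by_contra hne
    have hfC : f ∉ C := fun hfCmem =>
      Set.eq_empty_iff_forall_notMem.1 hdisj f ⟨⟨hfCmem, hne⟩, hf.1⟩
    obtain ⟨x, hxC, hxF⟩ := hC.2.1 _ hbase
    rcases hxF with rfl | hxF
    · exact hfC hxC
    · exact Set.eq_empty_iff_forall_notMem.1 hFC x ⟨hxF, hxC⟩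
  rwa [hfc] at hbase

lemma ncard_diff_inter {α : Type*} [Fintype α] (s t : Set α) :
    (s \ t).ncard + (s ∩ t).ncard = s.ncard := by
  rw [← Set.ncard_union_eq (Set.disjoint_left.2 fun x hx hx2 => hx.2 hx2.2)
    (Set.toFinite _) (Set.toFinite _), Set.diff_union_inter]

/-- let `v` be an element with `{v}` independent, `C` a cocircuit with `v ∈ C`,
`M'' = (M ⧸ {v}) ⧹ (C \ {v})`, `ℓ ≥ 1`, and `S` a set such that `x_S` is a minimal squarefree
monomial of `J(M'')^{(ℓ)}`. Then `S ∩ C = ∅`, `x_{S ∪ C} = x_S · x_C`, and `x_{S ∪ C}` is a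
minimal squarefree monomial of `J(M)^{(ℓ+1)}`. -/
theorem stmt16 {α : Type*} [Fintype α] (K : Type*) [Field K]
    (M : Matroid α) (hE : M.E = Set.univ)
    (v : α) (hvind : M.Indep {v})
    (C : Set α) (hC : IsCocircuit' M C) (hv : v ∈ C)
    (ℓ : ℕ) (hℓ : 1 ≤ ℓ) (S : Set α)
    (hmem : xS K S ∈ symbPow K (mdel (mcon M {v}) (C \ {v})) ℓ)
    (hmin : ∀ S' : Set α, S' ⊂ S →
      xS K S' ∉ symbPow K (mdel (mcon M {v}) (C \ {v})) ℓ) :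
    S ∩ C = ∅ ∧
    xS K (S ∪ C) = xS K S * xS K C ∧
    xS K (S ∪ C) ∈ symbPow K M (ℓ + 1) ∧
    ∀ T : Set α, T ⊂ S ∪ C → xS K T ∉ symbPow K M (ℓ + 1) := by
  classical
  obtain ⟨F₀, hF₀, hF₀C⟩ := exists_base_inter_eq hC hv
  have hvF₀ : v ∈ F₀ := by
    have : v ∈ F₀ ∩ C := hF₀C ▸ rfl
    exact this.1
  have hMPP := mpp_base_iff hE hv hF₀ hF₀C
  -- membership in the symbolic power of M'' in combinatorial form
  have Hmem : ∀ F : Set α, F ∩ C = ∅ → M.IsBase (insert v F) → ℓ ≤ (S ∩ F).ncard := by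
    intro F h1 h2
    exact (mem_symbPow_iff K _ ℓ S).1 hmem F ((hMPP F).2 ⟨h1, h2⟩)
  have Hmin : ∀ S' : Set α, S' ⊂ S →
      ∃ F, F ∩ C = ∅ ∧ M.IsBase (insert v F) ∧ (S' ∩ F).ncard < ℓ := by
    intro S' hs
    have h := hmin S' hs
    rw [mem_symbPow_iff] at h
    push_neg at h
    obtain ⟨F, hF, hcard⟩ := h
    rw [hMPP F] at hF
    exact ⟨F, hF.1, hF.2, hcard⟩
  -- Part 1 : S ∩ C = ∅
  have part1 : S ∩ C = ∅ := by
    by_contra hne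
    obtain ⟨x, hxS, hxC⟩ := Set.nonempty_iff_ne_empty.2 hne
    have hss : S \ C ⊂ S := ⟨Set.diff_subset, fun h => (h hxS).2 hxC⟩
    obtain ⟨F, h1, h2, h3⟩ := Hmin (S \ C) hss
    have heq : (S \ C) ∩ F = S ∩ F := by
      ext y
      constructor
      · rintro ⟨hy1, hy2⟩
        exact ⟨hy1.1, hy2⟩
      · rintro ⟨hy1, hy2⟩
        exact ⟨⟨hy1, fun hyC => Set.eq_empty_iff_forall_notMem.1 h1 y ⟨hy2, hyC⟩⟩, hy2⟩
    rw [heq] at h3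
    exact absurd (Hmem F h1 h2) (by omega)
  have hvS : v ∉ S := fun h => Set.eq_empty_iff_forall_notMem.1 part1 v ⟨h, hv⟩
  -- Part 2 : product formula
  have part2 : xS K (S ∪ C) = xS K S * xS K C := by
    have hU : (S ∪ C).toFinite.toFinset = S.toFinite.toFinset ∪ C.toFinite.toFinset := by
      ext i
      simp only [Set.Finite.mem_toFinset, Finset.mem_union, Set.mem_union]
    have hdisj : Disjoint S.toFinite.toFinset C.toFinite.toFinset := by
      rw [Finset.disjoint_left]
      intro a ha hb
      rw [Set.Finite.mem_toFinset] at ha hb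
      exact Set.eq_empty_iff_forall_notMem.1 part1 a ⟨ha, hb⟩
    rw [xS, xS, xS, hU, Finset.prod_union hdisj]
  -- Part 3 : membership
  have part3 : xS K (S ∪ C) ∈ symbPow K M (ℓ + 1) := by
    rw [mem_symbPow_iff]
    intro F hF
    have hk1 : 0 < (C ∩ F).ncard := (Set.ncard_pos (Set.toFinite _)).2 (hC.2.1 F hF)
    have hI : M.Indep (F \ (C \ {v})) := hF.indep.subset Set.diff_subset
    obtain ⟨G, hG, hIG, hGsub⟩ := hI.exists_isBase_subset_union_isBase hF₀
    have hGC : G ∩ C ⊆ {v} := by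
      rintro x ⟨hxG, hxC⟩
      rcases hGsub hxG with h | h
      · by_contra hne
        exact h.2 ⟨hxC, hne⟩
      · have : x ∈ F₀ ∩ C := ⟨h, hxC⟩
        rw [hF₀C] at this
        exact this
    have hvG : v ∈ G := by
      obtain ⟨x, hxC, hxG⟩ := hC.2.1 G hG
      have := hGC ⟨hxG, hxC⟩
      rwa [this] at hxG
    have hbase'' : M.IsBase (insert v (G \ {v})) := by
      rwa [Set.insert_diff_singleton, Set.insert_eq_self.2 hvG]
    have hdisj'' : (G \ {v}) ∩ C = ∅ := by
      ext x
      simp only [Set.mem_inter_iff, Set.mem_diff, Set.mem_singleton_iff,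
        Set.mem_empty_iff_false, iff_false]
      rintro ⟨⟨hxG, hxv⟩, hxC⟩
      exact hxv (hGC ⟨hxG, hxC⟩)
    have hHm := Hmem (G \ {v}) hdisj'' hbase''
    have hSG : S ∩ (G \ {v}) = S ∩ G := by
      ext x
      constructor
      · rintro ⟨h1, h2⟩; exact ⟨h1, h2.1⟩
      · rintro ⟨h1, h2⟩; exact ⟨h1, h2, fun h => hvS (h ▸ h1)⟩
    rw [hSG] at hHm
    -- cardinality bookkeeping
    have hcard_eq : G.ncard = F.ncard := hG.ncard_eq_ncard_of_isBase hF
    have h1 := ncard_diff_inter G F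
    have h2 := ncard_diff_inter F G
    have hci : (G ∩ F).ncard = (F ∩ G).ncard := by rw [Set.inter_comm]
    have hFGsub : F \ G ⊆ (C ∩ F) \ {v} := by
      rintro x ⟨hxF, hxG⟩
      have hx : x ∉ F \ (C \ {v}) := fun h => hxG (hIG h)
      have hxCv : x ∈ C \ {v} := by
        by_contra h
        exact hx ⟨hxF, h⟩
      exact ⟨⟨hxCv.1, hxF⟩, hxCv.2⟩
    have hFGcard : (F \ G).ncard ≤ ((C ∩ F) \ {v}).ncard :=
      Set.ncard_le_ncard hFGsub (Set.toFinite _)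
    have hSGsub : S ∩ G ⊆ (S ∩ F) ∪ ((G \ F) \ {v}) := by
      rintro x ⟨hxS, hxG⟩
      by_cases hxF : x ∈ F
      · exact Or.inl ⟨hxS, hxF⟩
      · exact Or.inr ⟨⟨hxG, hxF⟩, fun h => hvS (h ▸ hxS)⟩
    have hSGcard : (S ∩ G).ncard ≤ (S ∩ F).ncard + ((G \ F) \ {v}).ncard :=
      le_trans (Set.ncard_le_ncard hSGsub (Set.toFinite _)) (Set.ncard_union_le _ _)
    have hsplit : ((S ∪ C) ∩ F).ncard = (S ∩ F).ncard + (C ∩ F).ncard := by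
      rw [Set.union_inter_distrib_right, Set.ncard_union_eq
        (Set.disjoint_left.2 fun x hx hx2 =>
          Set.eq_empty_iff_forall_notMem.1 part1 x ⟨hx.1, hx2.1⟩)
        (Set.toFinite _) (Set.toFinite _)]
    rw [hsplit]
    by_cases hvF : v ∈ F
    · have e1 : (G \ F) \ {v} = G \ F := by
        ext x
        simp only [Set.mem_diff, Set.mem_singleton_iff, and_iff_left_iff_imp, and_imp]
        intro _ hxF hxv
        exact hxF (hxv ▸ hvF)
      have e2 : ((C ∩ F) \ {v}).ncard + 1 = (C ∩ F).ncard :=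
        Set.ncard_diff_singleton_add_one ⟨hv, hvF⟩ (Set.toFinite _)
      rw [e1] at hSGcard
      omega
    · have hvGF : v ∈ G \ F := ⟨hvG, hvF⟩
      have e1 : ((G \ F) \ {v}).ncard + 1 = (G \ F).ncard :=
        Set.ncard_diff_singleton_add_one hvGF (Set.toFinite _)
      have e2 : (C ∩ F) \ {v} = C ∩ F := by
        ext x
        simp only [Set.mem_diff, Set.mem_singleton_iff, and_iff_left_iff_imp, and_imp]
        intro hxCF hxv
        exact hvF (hxv ▸ hxCF.2)
      rw [e2] at hFGcard
      omega
  refine ⟨part1, part2, part3, ?_⟩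
  -- Part 4 : minimality
  intro T hT hbad
  rw [mem_symbPow_iff] at hbad
  have hTsub : T ⊆ S ∪ C := hT.1
  have key : ∀ F : Set α, F ∩ C = ∅ → M.IsBase (insert v F) → ℓ ≤ ((T \ C) ∩ F).ncard := by
    intro F h1 h2
    have h3 := hbad _ h2
    have hsub2 : T ∩ insert v F ⊆ insert v ((T \ C) ∩ F) := by
      rintro x ⟨hxT, hx⟩
      rcases hx with rfl | hxF
      · exact Set.mem_insert _ _
      · exact Set.mem_insert_of_mem _
          ⟨⟨hxT, fun hxC => Set.eq_empty_iff_forall_notMem.1 h1 x ⟨hxF, hxC⟩⟩, hxF⟩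
    have h4 := Set.ncard_le_ncard hsub2 (Set.toFinite _)
    have h5 := Set.ncard_insert_le v ((T \ C) ∩ F)
    omega
  have hTCsub : T \ C ⊆ S := by
    rintro x ⟨hxT, hxC⟩
    exact (hTsub hxT).resolve_right hxC
  have hTCS : T \ C = S := by
    by_contra hne
    obtain ⟨F, h1, h2, h3⟩ := Hmin (T \ C) ⟨hTCsub, fun h => hne (Set.Subset.antisymm hTCsub h)⟩
    exact absurd (key F h1 h2) (by omega)
  have hST : S ⊆ T := hTCS ▸ (Set.diff_subset : T \ C ⊆ T)
  obtain ⟨c, hcC, hcT⟩ : ∃ c, c ∈ C ∧ c ∉ T := by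
    by_contra h
    push_neg at h
    exact hT.2 (Set.union_subset hST h)
  have hSne : S.Nonempty := by
    rw [Set.nonempty_iff_ne_empty]
    rintro rfl
    have hb : M.IsBase (insert v (F₀ \ {v})) := by
      rwa [Set.insert_diff_singleton, Set.insert_eq_self.2 hvF₀]
    have hd : (F₀ \ {v}) ∩ C = ∅ := by
      ext x
      simp only [Set.mem_inter_iff, Set.mem_diff, Set.mem_singleton_iff,
        Set.mem_empty_iff_false, iff_false]
      rintro ⟨⟨hxF, hxv⟩, hxC⟩
      have : x ∈ F₀ ∩ C := ⟨hxF, hxC⟩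
      rw [hF₀C] at this
      exact hxv this
    have := Hmem _ hd hb
    simp only [Set.empty_inter, Set.ncard_empty] at this
    omega
  obtain ⟨s, hs⟩ := hSne
  obtain ⟨F'', h1, h2, h3⟩ := Hmin (S \ {s}) (Set.sdiff_singleton_ssubset.2 hs)
  have hSF'' : (S ∩ F'').ncard ≤ ℓ := by
    have hsub3 : S ∩ F'' ⊆ insert s ((S \ {s}) ∩ F'') := by
      rintro x ⟨hxS, hxF⟩
      by_cases hxs : x = s
      · exact hxs ▸ Set.mem_insert _ _
      · exact Set.mem_insert_of_mem _ ⟨⟨hxS, hxs⟩, hxF⟩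
    have h4 := Set.ncard_le_ncard hsub3 (Set.toFinite _)
    have h5 := Set.ncard_insert_le s ((S \ {s}) ∩ F'')
    omega
  have hbase' := exchange_lemma hC hv hcC h1 h2
  have h4 := hbad _ hbase'
  have hsub4 : T ∩ insert c F'' ⊆ S ∩ F'' := by
    rintro x ⟨hxT, hx⟩
    rcases hx with rfl | hxF
    · exact absurd hxT hcT
    · have hxC : x ∉ C := fun hxC => Set.eq_empty_iff_forall_notMem.1 h1 x ⟨hxF, hxC⟩
      exact ⟨hTCS ▸ (⟨hxT, hxC⟩ : x ∈ T \ C), hxF⟩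
  have h5 := Set.ncard_le_ncard hsub4 (Set.toFinite _)
  omega
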